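/- Let U be a set of users, T a set of topics, and INT : U → 2^T an interest function such that |INT(u) ∩ INT(v)| ≤ 1 for all distinct u, v ∈ U, and such that each topic is in INT(u) for at least two users u. Then every topic-connected edge set E on U has |E| ≥ Σ_{t∈T} (|U_t| − 1), and this bound is achieved by taking a spanning star on U_t for each topic t (these edge sets are pairwise disjoint). -/

import Mathlib

/-- The set of users interested in topic `t`. -/
def Ut {U T : Type*} [Fintype U] [DecidableEq T] (INT : U → Finset T) (t : T) : Finset U :=
  Finset.univ.filter fun u => t ∈ INT u

/-- An edge set `E` on the users is topic-connected if for every topic `t` the graph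
induced by `E` on the users interested in `t` is connected (trivially so when at most
one user is interested). -/
def topicConnected {U T : Type*} [Fintype U] [DecidableEq U] [DecidableEq T]
    (INT : U → Finset T) (E : Finset (Sym2 U)) : Prop :=
  ∀ t : T, ((SimpleGraph.fromEdgeSet (E : Set (Sym2 U))).induce
      ((Ut INT t : Finset U) : Set U)).Preconnected

open Finset SimpleGraph Walk

/-- A preconnected graph on a finite vertex type has at least `card V - 1` edges. -/
lemma preconnected_card_le_edges {V : Type*} [Fintype V] (G : SimpleGraph V)
    [Fintype G.edgeSet] (h : G.Preconnected) :
    Fintype.card V - 1 ≤ G.edgeFinset.card := by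
  classical
  rcases isEmpty_or_nonempty V with hV | hV
  · simp
  obtain ⟨r⟩ := hV
  choose p hp using fun v : V => (h v r).exists_walk_length_eq_dist
  have hpos : ∀ v : V, v ≠ r → 0 < G.dist v r := fun v hv => (h v r).pos_dist_of_ne hv
  have hmem : ∀ v ∈ ({r} : Finset V)ᶜ, s(v, (p v).getVert 1) ∈ G.edgeFinset := by
    intro v hv
    rw [Finset.mem_compl, Finset.mem_singleton] at hv
    have hnn : ¬ (p v).Nil := not_nil_of_ne hv
    have := ((p v).firstDart hnn).edge_mem
    rw [Walk.edge_firstDart] at this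
    rwa [SimpleGraph.mem_edgeFinset]
  have key : ∀ a : V, a ≠ r → ∀ b : V, (p a).getVert 1 = b →
      G.dist b r ≤ G.dist a r - 1 := by
    intro a ha b hb
    have hnn : ¬ (p a).Nil := not_nil_of_ne ha
    have htail : ((p a).tail.copy hb rfl).length = (p a).length - 1 := by
      have := Walk.length_tail_add_one hnn
      simp only [Walk.length_copy]
      omega
    have := SimpleGraph.dist_le ((p a).tail.copy hb rfl)
    rw [htail, hp a] at this
    exact this
  have hinj : Set.InjOn (fun v : V => s(v, (p v).getVert 1)) ↑(({r} : Finset V)ᶜ) := by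
    intro a ha b hb hab
    simp only [Finset.coe_compl, Set.mem_compl_iff, Finset.mem_coe, Finset.mem_singleton] at ha hb
    simp only [Sym2.eq_iff] at hab
    rcases hab with ⟨rfl, -⟩ | ⟨h1, h2⟩
    · rfl
    · exfalso
      have k1 := key a ha b h2
      have k2 := key b hb a h1.symm
      have p1 := hpos a ha
      have p2 := hpos b hb
      omega
  have := Finset.card_le_card_of_injOn _ hmem hinj
  rwa [Finset.card_compl, Finset.card_singleton] at this

/-- If `|INT(u) ∩ INT(v)| ≤ 1` for all distinct users and each topic interests at least
two users, then every topic-connected edge set has at least `Σ_t (|U_t| − 1)` edges, and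
this bound is achieved. -/
theorem topicConnected_lower_bound {U T : Type*} [Fintype U] [Fintype T]
    [DecidableEq U] [DecidableEq T] (INT : U → Finset T)
    (h1 : ∀ u v : U, u ≠ v → (INT u ∩ INT v).card ≤ 1)
    (h2 : ∀ t : T, 2 ≤ (Ut INT t).card) :
    (∀ E : Finset (Sym2 U), topicConnected INT E →
        ∑ t : T, ((Ut INT t).card - 1) ≤ E.card) ∧
    (∃ E : Finset (Sym2 U), topicConnected INT E ∧
        E.card = ∑ t : T, ((Ut INT t).card - 1)) := by
  classical
  -- a key disjointness fact: a non-diagonal edge lies inside `Ut t` for at most one `t`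
  have disj : ∀ t t' : T, t ≠ t' → ∀ u v : U, u ≠ v →
      u ∈ Ut INT t → v ∈ Ut INT t → u ∈ Ut INT t' → v ∈ Ut INT t' → False := by
    intro t t' htt u v huv hu hv hu' hv'
    simp only [Ut, Finset.mem_filter] at hu hv hu' hv'
    have : ({t, t'} : Finset T) ⊆ INT u ∩ INT v := by
      intro x hx
      simp only [Finset.mem_insert, Finset.mem_singleton] at hx
      rcases hx with rfl | rfl <;> simp [Finset.mem_inter, hu.2, hv.2, hu'.2, hv'.2]
    have h2' := Finset.card_le_card this
    rw [Finset.card_insert_of_notMem (by simpa using htt), Finset.card_singleton] at h2'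
    have := h1 u v huv
    omega
  constructor
  · -- lower bound
    intro E hE
    set F : T → Finset (Sym2 U) :=
      fun t => E.filter (fun e => ¬ e.IsDiag ∧ ∀ u ∈ e, u ∈ Ut INT t) with hF
    have hFsub : ∀ t, F t ⊆ E := fun t => Finset.filter_subset _ _
    have hFdisj : ∀ t ∈ (Finset.univ : Finset T), ∀ t' ∈ (Finset.univ : Finset T),
        t ≠ t' → Disjoint (F t) (F t') := by
      intro t _ t' _ htt
      rw [Finset.disjoint_left]
      intro e het het'
      simp only [hF, Finset.mem_filter] at het het'
      obtain ⟨-, hd, hmem⟩ := het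
      obtain ⟨-, -, hmem'⟩ := het'
      induction e with
      | _ u v =>
        rw [Sym2.mk_isDiag_iff] at hd
        exact disj t t' htt u v hd (hmem u (by simp)) (hmem v (by simp))
          (hmem' u (by simp)) (hmem' v (by simp))
    have hFcard : ∀ t : T, (Ut INT t).card - 1 ≤ (F t).card := by
      intro t
      set S : Set U := ((Ut INT t : Finset U) : Set U) with hS
      set G := (SimpleGraph.fromEdgeSet (E : Set (Sym2 U))).induce S with hG
      haveI : Fintype G.edgeSet := (Set.toFinite _).fintype
      have hcardV : Fintype.card S = (Ut INT t).card := by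
        exact (Fintype.card_congr (Equiv.subtypeEquivRight fun x =>
          Finset.mem_coe)).trans (Fintype.card_coe _)
      have hconn := hE t
      have hle := preconnected_card_le_edges G hconn
      rw [hcardV] at hle
      refine hle.trans (Finset.card_le_card_of_injOn (Sym2.map Subtype.val) ?_ ?_)
      · intro e he
        rw [Finset.mem_coe, SimpleGraph.mem_edgeFinset] at he
        induction e with
        | _ a b =>
          rw [SimpleGraph.mem_edgeSet] at he
          have hadj : (SimpleGraph.fromEdgeSet (E : Set (Sym2 U))).Adj a.val b.val := he
          rw [SimpleGraph.fromEdgeSet_adj] at hadj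
          simp only [hF, Sym2.map_pair_eq, Finset.mem_coe, Finset.mem_filter]
          refine ⟨hadj.1, by simpa [Sym2.mk_isDiag_iff] using hadj.2, ?_⟩
          intro u hu
          rw [Sym2.mem_iff] at hu
          rcases hu with rfl | rfl
          · exact a.property
          · exact b.property
      · exact (Sym2.map.injective Subtype.val_injective).injOn
    calc ∑ t : T, ((Ut INT t).card - 1) ≤ ∑ t : T, (F t).card :=
          Finset.sum_le_sum fun t _ => hFcard t
      _ = (Finset.univ.biUnion F).card := (Finset.card_biUnion hFdisj).symm
      _ ≤ E.card := Finset.card_le_card (Finset.biUnion_subset.mpr fun t _ => hFsub t)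
  · -- achievability: spanning stars
    have hne : ∀ t : T, (Ut INT t).Nonempty := fun t =>
      Finset.card_pos.mp (lt_of_lt_of_le (by norm_num) (h2 t))
    choose c hc using hne
    set St : T → Finset (Sym2 U) :=
      fun t => ((Ut INT t).erase (c t)).image (fun v => s(c t, v)) with hSt
    have hStmem : ∀ t, ∀ e ∈ St t, ¬ e.IsDiag ∧ ∀ u ∈ e, u ∈ Ut INT t := by
      intro t e he
      simp only [hSt, Finset.mem_image, Finset.mem_erase] at he
      obtain ⟨v, ⟨hvne, hv⟩, rfl⟩ := he
      refine ⟨by simp [Sym2.mk_isDiag_iff, Ne.symm hvne], ?_⟩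
      intro u hu
      rw [Sym2.mem_iff] at hu
      rcases hu with rfl | rfl
      · exact hc t
      · exact hv
    have hStdisj : ∀ t ∈ (Finset.univ : Finset T), ∀ t' ∈ (Finset.univ : Finset T),
        t ≠ t' → Disjoint (St t) (St t') := by
      intro t _ t' _ htt
      rw [Finset.disjoint_left]
      intro e het het'
      obtain ⟨hd, hmem⟩ := hStmem t e het
      obtain ⟨-, hmem'⟩ := hStmem t' e het'
      induction e with
      | _ u v =>
        rw [Sym2.mk_isDiag_iff] at hd
        exact disj t t' htt u v hd (hmem u (by simp)) (hmem v (by simp))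
          (hmem' u (by simp)) (hmem' v (by simp))
    refine ⟨Finset.univ.biUnion St, ?_, ?_⟩
    · -- topic-connected
      intro t
      set E₀ := Finset.univ.biUnion St with hE₀
      have hadjc : ∀ u : ((Ut INT t : Finset U) : Set U), u.val ≠ c t →
          ((SimpleGraph.fromEdgeSet (E₀ : Set (Sym2 U))).induce
            ((Ut INT t : Finset U) : Set U)).Adj u ⟨c t, by simpa using hc t⟩ := by
        intro u hu
        have hmem : s(c t, u.val) ∈ E₀ := by
          rw [hE₀, Finset.mem_biUnion]
          refine ⟨t, Finset.mem_univ t, ?_⟩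
          simp only [hSt, Finset.mem_image]
          exact ⟨u.val, Finset.mem_erase.mpr ⟨hu, by simpa using u.property⟩, rfl⟩
        show (SimpleGraph.fromEdgeSet (E₀ : Set (Sym2 U))).Adj u.val (c t)
        rw [SimpleGraph.fromEdgeSet_adj]
        refine ⟨?_, hu⟩
        rw [Sym2.eq_swap]
        exact_mod_cast hmem
      intro u v
      have hreach : ∀ w : ((Ut INT t : Finset U) : Set U),
          ((SimpleGraph.fromEdgeSet (E₀ : Set (Sym2 U))).induce
            ((Ut INT t : Finset U) : Set U)).Reachable w ⟨c t, by simpa using hc t⟩ := by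
        intro w
        by_cases hw : w.val = c t
        · have : w = ⟨c t, by simpa using hc t⟩ := Subtype.ext hw
          rw [this]
        · exact (hadjc w hw).reachable
      exact (hreach u).trans (hreach v).symm
    · -- cardinality
      rw [Finset.card_biUnion hStdisj]
      refine Finset.sum_congr rfl fun t _ => ?_
      rw [hSt]
      rw [Finset.card_image_of_injective _ ?_, Finset.card_erase_of_mem (hc t)]
      intro a b hab
      simp only [Sym2.eq_iff, true_and] at hab
      rcases hab with h | ⟨h1, h2⟩
      · exact h
      · exact h2.trans h1
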